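/- Let G be a graph with an even number n ≥ 2 of vertices. Then mp(G) = n − 1 if and only if G is the complete graph K_n. -/

import Mathlib

open SimpleGraph

/-- An almost-perfect matching: a matching covering all vertices except exactly one. -/
def SimpleGraph.Subgraph.IsAlmostPerfectMatching {V : Type*} {G : SimpleGraph V}
    (M : G.Subgraph) : Prop :=
  M.IsMatching ∧ ∃ v : V, M.verts = {v}ᶜ

/-- `G` has a perfect matching or an almost-perfect matching. -/
def SimpleGraph.HasGoodMatching {V : Type*} (G : SimpleGraph V) : Prop :=
  (∃ M : G.Subgraph, M.IsPerfectMatching) ∨ (∃ M : G.Subgraph, M.IsAlmostPerfectMatching)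

/-- The matching preclusion number of `G`. -/
noncomputable def SimpleGraph.mp {V : Type*} [Fintype V] (G : SimpleGraph V) : ℕ :=
  sInf { k | ∃ F : Finset (Sym2 V), ↑F ⊆ G.edgeSet ∧ F.card = k ∧
    ¬ (G.deleteEdges ↑F).HasGoodMatching }

/-- When the number of vertices is even, no almost-perfect matching exists. -/
lemma noAPM {V : Type*} [Fintype V] (hn : Even (Fintype.card V)) (h2 : 2 ≤ Fintype.card V)
    {H : SimpleGraph V} (M : H.Subgraph) : ¬ M.IsAlmostPerfectMatching := by
  classical
  rintro ⟨hm, v, hv⟩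
  have he : Even M.verts.toFinset.card := hm.even_card
  rw [hv] at he
  simp only [Set.toFinset_compl, Set.toFinset_singleton, Finset.card_compl,
    Finset.card_singleton] at he
  rw [Nat.even_iff] at he hn
  omega

/-- Deleting all edges at a vertex precludes good matchings (even case). -/
lemma degMem {V : Type*} [Fintype V] [DecidableEq V] (G : SimpleGraph V) [DecidableRel G.Adj]
    (hn : Even (Fintype.card V)) (h2 : 2 ≤ Fintype.card V) (v : V) :
    ∃ F : Finset (Sym2 V), ↑F ⊆ G.edgeSet ∧ F.card = G.degree v ∧
      ¬ (G.deleteEdges ↑F).HasGoodMatching := by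
  refine ⟨G.incidenceFinset v, ?_, ?_, ?_⟩
  · rw [show (↑(G.incidenceFinset v) : Set (Sym2 V)) = G.incidenceSet v from Set.coe_toFinset _]
    exact G.incidenceSet_subset v
  · exact G.card_incidenceFinset_eq_degree v
  · rintro (⟨M, hM⟩ | ⟨M, hM⟩)
    · obtain ⟨w, hw, -⟩ := hM.1 (hM.2 v)
      have h1 := M.adj_sub hw
      rw [deleteEdges_adj] at h1
      exact h1.2 (by rw [Finset.mem_coe, mem_incidenceFinset]; exact ⟨h1.1, Sym2.mem_mk_left v w⟩)
    · exact noAPM hn h2 M hM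

/-- The complete graph on an even number of vertices minus at most `n - 2` edges still has
a perfect matching, via the round-robin 1-factorization of `K_n`. -/
lemma keyPM {V : Type*} [Fintype V] (hn : Even (Fintype.card V)) (h2 : 2 ≤ Fintype.card V)
    (F : Finset (Sym2 V)) (hF : F.card ≤ Fintype.card V - 2) :
    ∃ M : ((⊤ : SimpleGraph V).deleteEdges ↑F).Subgraph, M.IsPerfectMatching := by
  classical
  set n := Fintype.card V with hcard
  set q := n - 1 with hq
  haveI : NeZero q := ⟨by omega⟩
  have hodd : Odd q := by
    rw [Nat.odd_iff]; rw [Nat.even_iff] at hn; omega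
  have h2inv : (2 : ZMod q) * (2 : ZMod q)⁻¹ = 1 := by
    have := ZMod.coe_mul_inv_eq_one (n := q) 2 (Nat.coprime_two_left.mpr hodd)
    simpa using this
  have hinj2 : ∀ a b : ZMod q, 2 * a = 2 * b → a = b := by
    intro a b hab
    have h := congrArg (fun x => (2 : ZMod q)⁻¹ * x) hab
    simp only [← mul_assoc, mul_comm (2 : ZMod q)⁻¹ 2, h2inv, one_mul] at h
    exact h
  have hce : Fintype.card V = Fintype.card (Option (ZMod q)) := by
    simp [ZMod.card]; omega
  let e : V ≃ Option (ZMod q) := Fintype.equivOfCardEq hce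
  -- partner function of the `i`-th matching
  let f : ZMod q → Option (ZMod q) → Option (ZMod q) := fun i x =>
    x.elim (some i) (fun a => if a = i then none else some (2 * i - a))
  have hff : ∀ i x, f i (f i x) = x := by
    intro i x
    cases x with
    | none => simp [f]
    | some a =>
      by_cases h : a = i
      · simp [f, h]
      · simp only [f, Option.elim, if_neg h]
        have hne : ¬ (2 * i - a = i) := fun hc => h (by linear_combination -hc)
        simp only [if_neg hne]
        congr 1
        ring
  have hfp : ∀ i x, f i x ≠ x := by
    intro i x
    cases x with
    | none => simp [f]
    | some a =>
      by_cases h : a = i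
      · simp [f, h]
      · simp only [f, Option.elim, if_neg h, ne_eq, Option.some.injEq]
        intro hc
        exact h (hinj2 a i (by linear_combination -hc))
  -- coloring of the edges of `K_n`
  let g : Option (ZMod q) → Option (ZMod q) → ZMod q := fun x y =>
    x.elim (y.elim 0 id) (fun a => y.elim a (fun b => (2 : ZMod q)⁻¹ * (a + b)))
  have gsymm : ∀ x y, g x y = g y x := by
    intro x y
    cases x <;> cases y <;> simp only [g, Option.elim, id]
    ring
  let c : Sym2 (Option (ZMod q)) → ZMod q := Sym2.lift ⟨g, gsymm⟩
  have hcolor : ∀ i x, c s(x, f i x) = i := by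
    intro i x
    cases x with
    | none => simp [c, f, g]
    | some a =>
      by_cases h : a = i
      · simp [c, f, g, h]
      · simp only [c, f, g, Option.elim, if_neg h, Sym2.lift_mk]
        have : a + (2 * i - a) = 2 * i := by ring
        rw [this, ← mul_assoc, mul_comm (2 : ZMod q)⁻¹ 2, h2inv, one_mul]
  -- choose a color avoided by `F`
  have hcardlt : (F.image (fun s => c (s.map e))).card < Fintype.card (ZMod q) := by
    calc (F.image (fun s => c (s.map e))).card ≤ F.card := Finset.card_image_le
    _ < q := by omega
    _ = Fintype.card (ZMod q) := (ZMod.card q).symm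
  obtain ⟨i, hi⟩ : ∃ i, i ∉ F.image (fun s => c (s.map e)) := by
    have hne : ((F.image (fun s => c (s.map e)))ᶜ : Finset (ZMod q)).Nonempty := by
      rw [← Finset.card_pos, Finset.card_compl]
      omega
    obtain ⟨i, hi⟩ := hne
    exact ⟨i, Finset.mem_compl.mp hi⟩
  -- build the perfect matching with color `i`
  refine ⟨⟨Set.univ, fun x y => e y = f i (e x), ?_, fun _ => Set.mem_univ _, ?_⟩, ?_,
    fun v => Set.mem_univ v⟩
  · intro x y hxy
    rw [deleteEdges_adj]
    constructor
    · simp only [top_adj]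
      intro hc
      exact hfp i (e x) (by rw [← hxy, hc])
    · intro hmem
      apply hi
      refine Finset.mem_image.mpr ⟨s(x, y), hmem, ?_⟩
      rw [Sym2.map_pair_eq, hxy, hcolor]
  · refine ⟨fun x y hxy => ?_⟩
    rw [hxy]
    exact (hff i (e x)).symm
  · intro v _
    refine ⟨e.symm (f i (e v)), e.apply_symm_apply _, ?_⟩
    intro w hw
    apply e.injective
    rw [hw, e.apply_symm_apply]

theorem stmt8 {V : Type*} [Fintype V] (G : SimpleGraph V)
    (hn : Even (Fintype.card V)) (h2 : 2 ≤ Fintype.card V) :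
    G.mp = Fintype.card V - 1 ↔ G = ⊤ := by
  classical
  have hmp_le : ∀ v : V, G.mp ≤ G.degree v := by
    intro v
    obtain ⟨F, h1, h2', h3⟩ := degMem G hn h2 v
    exact Nat.sInf_le ⟨F, h1, h2', h3⟩
  constructor
  · intro hmp
    ext u v
    simp only [top_adj]
    constructor
    · exact fun h => G.ne_of_adj h
    · intro huv
      by_contra hadj
      have hsub : G.neighborFinset u ⊆ (Finset.univ.erase u).erase v := by
        intro w hw
        rw [mem_neighborFinset] at hw
        refine Finset.mem_erase.mpr ⟨?_, Finset.mem_erase.mpr ⟨G.ne_of_adj hw.symm, Finset.mem_univ w⟩⟩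
        intro hc
        exact hadj (hc ▸ hw)
      have hdeg : G.degree u ≤ Fintype.card V - 2 := by
        have := Finset.card_le_card hsub
        rw [degree]
        have hv : v ∈ Finset.univ.erase u := Finset.mem_erase.mpr ⟨Ne.symm huv, Finset.mem_univ v⟩
        rw [Finset.card_erase_of_mem hv, Finset.card_erase_of_mem (Finset.mem_univ u),
          Finset.card_univ] at this
        omega
      have := hmp_le u
      omega
  · intro hG
    subst hG
    apply le_antisymm
    · obtain ⟨v⟩ := Fintype.card_pos_iff.mp (by omega : 0 < Fintype.card V)
      have hIrrel : ∀ (i1 i2 : Fintype ((⊤ : SimpleGraph V).neighborSet v)),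
          @SimpleGraph.degree V ⊤ v i1 = @SimpleGraph.degree V ⊤ v i2 := fun i1 i2 => by
        rw [Subsingleton.elim i1 i2]
      exact (hmp_le v).trans (le_of_eq ((hIrrel _ _).trans (complete_graph_degree v)))
    · refine le_csInf ?_ ?_
      · obtain ⟨v⟩ := Fintype.card_pos_iff.mp (by omega : 0 < Fintype.card V)
        obtain ⟨F, h1, h2', h3⟩ := degMem (⊤ : SimpleGraph V) hn h2 v
        exact ⟨_, F, h1, h2', h3⟩
      · rintro b ⟨F, hsub, hcardF, hno⟩
        by_contra hb
        push_neg at hb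
        have : F.card ≤ Fintype.card V - 2 := by omega
        obtain ⟨M, hM⟩ := keyPM hn h2 F this
        exact hno (Or.inl ⟨M, hM⟩)
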